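/- Let X be a set and let (H, e, ⋈) with j : F_X → H be a universal D-envelope of (F_X, ē). Write a_ξ = j(ā_ξ), b_ξ = e − a_ξ, and for distinct ξ, η ∈ X set c_{ξ,η} = ⋈(0, a_ξ + a_η − e, a_ξ, a_η). Define subgroups of H: G_∅ = ℤe; G_{ξ} = the subgroup generated by {a_ξ, b_ξ}; G_{ξ,η} = the subgroup generated by {a_ξ, a_η, b_ξ, b_η, c_{ξ,η}}. Then: (i) the homomorphism φ_ξ : ℤ² → H, (x₀,x₁) ↦ x₀a_ξ + x₁b_ξ, is an isomorphism of partially ordered abelian groups from ℤ² (componentwise order) onto G_{ξ}, i.e. it is injective with image G_{ξ} and φ_ξ(v) ≥ 0 iff v ≥ 0; likewise ψ_{ξ,η} : ℤ⁴ → H, (x₀,x₁,x₂,x₃) ↦ x₀c_{ξ,η} + x₁(a_ξ − c_{ξ,η}) + x₂(a_η − c_{ξ,η}) + x₃(c_{ξ,η} + e − a_ξ − a_η), is an isomorphism of partially ordered abelian groups from ℤ⁴ onto G_{ξ,η}; (ii) G_Y ∩ G_Z = G_{Y∩Z} for all subsets Y, Z of X with at most two elements. -/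

import Mathlib

/-- An interpolator on a partially ordered abelian group. -/
def IsInterpolator {H : Type*} [AddCommGroup H] [PartialOrder H] [IsOrderedAddMonoid H] (ι : H → H → H → H → H) : Prop :=
  (∀ x x' y y', ι x x' y y' = ι x' x y y') ∧
  (∀ x x' y y', ι x x' y y' = ι x x' y' y) ∧
  (∀ x x' y y', x ≤ y → x ≤ y' → x' ≤ y → x' ≤ y' →
    (x ≤ ι x x' y y' ∧ x' ≤ ι x x' y y' ∧ ι x x' y y' ≤ y ∧ ι x x' y y' ≤ y'))

/-- A D-structure: an unperforated partially ordered abelian group with a distinguished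
positive element `e` such that `0 ≤ x` and `3x ≤ e` imply `x = 0`, and an interpolator. -/
def IsDStructure {H : Type*} [AddCommGroup H] [PartialOrder H] [IsOrderedAddMonoid H] (e : H) (ι : H → H → H → H → H) : Prop :=
  (∀ (m : ℕ) (x : H), 0 < m → 0 ≤ m • x → 0 ≤ x) ∧ 0 ≤ e ∧
  (∀ x : H, 0 ≤ x → 3 • x ≤ e → x = 0) ∧ IsInterpolator ι

/-- A D-morphism between D-structures. -/
def IsDMorphism {H K : Type*} [AddCommGroup H] [PartialOrder H] [IsOrderedAddMonoid H] [AddCommGroup K] [PartialOrder K] [IsOrderedAddMonoid K]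
    (eH : H) (ιH : H → H → H → H → H) (eK : K) (ιK : K → K → K → K → K)
    (h : H →+ K) : Prop :=
  Monotone h ∧ h eH = eK ∧
  ∀ x x' y y', h (ιH x x' y y') = ιK (h x) (h x') (h y) (h y')

/-- A universal D-envelope of a pointed partially ordered abelian group `(G, eG)`. -/
def IsUniversalDEnvelope {G H : Type*} [AddCommGroup G] [PartialOrder G] [IsOrderedAddMonoid G] [AddCommGroup H] [PartialOrder H] [IsOrderedAddMonoid H]
    (eG : G) (eH : H) (bow : H → H → H → H → H) (j : G →+ H) : Prop :=
  IsDStructure eH bow ∧ Monotone j ∧ j eG = eH ∧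
  ∀ (K : Type*) [AddCommGroup K] [PartialOrder K] [IsOrderedAddMonoid K], ∀ (eK : K) (ι : K → K → K → K → K),
    IsDStructure eK ι → ∀ (f : G →+ K), Monotone f → f eG = eK →
    ∃! h : H →+ K, IsDMorphism eH bow eK ι h ∧ ∀ g, h (j g) = f g

/-- The constant function `1` on the powerset of `X`. -/
def eBar (X : Type*) : Set X → ℤ := fun _ => 1

/-- The characteristic function of `{Y ⊆ X : ξ ∈ Y}`. -/
noncomputable def aBar {X : Type*} (ξ : X) : Set X → ℤ :=
  Set.indicator {Y : Set X | ξ ∈ Y} fun _ => 1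

/-- The subgroup of `Set X → ℤ` generated by `ē` and the `ā_ξ`, ordered componentwise. -/
noncomputable def FX (X : Type*) : AddSubgroup (Set X → ℤ) :=
  AddSubgroup.closure ({eBar X} ∪ Set.range (aBar (X := X)))

/-- `ē` as an element of `F_X`. -/
noncomputable def eElem (X : Type*) : FX X :=
  ⟨eBar X, AddSubgroup.subset_closure (Set.mem_union_left _ rfl)⟩

/-- `ā_ξ` as an element of `F_X`. -/
noncomputable def aElem {X : Type*} (ξ : X) : FX X :=
  ⟨aBar ξ, AddSubgroup.subset_closure (Set.mem_union_right _ ⟨ξ, rfl⟩)⟩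

/-- The subgroup `G_Z` of `H` associated with a subset `Z` of `X` with at most two
elements: it is generated by `e`, the `a_ξ` and `b_ξ = e - a_ξ` for `ξ ∈ Z`, and
the `c_{ξ,η}` for distinct `ξ, η ∈ Z`. -/
def Gsub {X H : Type*} [AddCommGroup H] [PartialOrder H] [IsOrderedAddMonoid H] (e : H) (a : X → H)
    (c : X → X → H) (Z : Set X) : AddSubgroup H :=
  AddSubgroup.closure
    ({e} ∪ (a '' Z) ∪ ((fun ξ => e - a ξ) '' Z) ∪
      {w | ∃ ξ ∈ Z, ∃ η ∈ Z, ξ ≠ η ∧ w = c ξ η})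

/-- The map `φ_ξ : ℤ² → H`, `(x₀, x₁) ↦ x₀ a_ξ + x₁ b_ξ`. -/
def phiMap {H : Type*} [AddCommGroup H] [PartialOrder H] [IsOrderedAddMonoid H] (e aξ : H) : ℤ × ℤ → H :=
  fun p => p.1 • aξ + p.2 • (e - aξ)

/-- The map `ψ_{ξ,η} : ℤ⁴ → H`,
`(x₀,x₁,x₂,x₃) ↦ x₀ c + x₁(a_ξ − c) + x₂(a_η − c) + x₃(c + e − a_ξ − a_η)`. -/
def psiMap {H : Type*} [AddCommGroup H] [PartialOrder H] [IsOrderedAddMonoid H] (e aξ aη c : H) : (Fin 4 → ℤ) → H :=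
  fun v => v 0 • c + v 1 • (aξ - c) + v 2 • (aη - c) + v 3 • (c + e - aξ - aη)

universe u v

section EnvelopeAux

universe w

private instance uliftOACG : IsOrderedAddMonoid (ULift.{w} ℤ) :=
  { add_le_add_left := fun a b h c => by
      have h' : a.down ≤ b.down := h
      change a.down + c.down ≤ b.down + c.down
      omega }

private def downHom : ULift.{w} ℤ →+ ℤ :=
  { toFun := ULift.down, map_zero' := rfl, map_add' := fun _ _ => rfl }

private def upHom : ℤ →+ ULift.{w} ℤ :=
  { toFun := ULift.up, map_zero' := rfl, map_add' := fun _ _ => rfl }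

private lemma intD : IsDStructure (1 : ℤ) (fun x x' _ _ => max x x') := by
  refine ⟨?_, by norm_num, ?_, ?_, ?_, ?_⟩
  · intro m x hm hx
    by_contra hneg; push_neg at hneg
    have hm' : (0:ℤ) < (m:ℤ) := by exact_mod_cast hm
    rw [nsmul_eq_mul] at hx
    nlinarith [mul_pos hm' (neg_pos.mpr hneg), (by simp [nsmul_eq_mul] : (m:ℤ) * x = m • x)]
  · intro x hx h3; simp only [nsmul_eq_mul] at h3; omega
  · exact fun x x' y y' => max_comm x x'
  · exact fun _ _ _ _ => rfl
  · exact fun x x' y y' h1 h2 h3 h4 => ⟨le_max_left _ _, le_max_right _ _, max_le h1 h3, max_le h2 h4⟩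

private lemma intDU :
    IsDStructure (ULift.up 1 : ULift.{w} ℤ)
      (fun x x' _ _ => ULift.up (max x.down x'.down)) := by
  refine ⟨?_, ?_, ?_, ?_, ?_, ?_⟩
  · intro m x hm hx
    exact intD.1 m x.down hm hx
  · exact intD.2.1
  · intro x hx h3
    exact ULift.down_injective (intD.2.2.1 x.down hx h3)
  · exact fun x x' y y' => congrArg ULift.up (max_comm x.down x'.down)
  · exact fun _ _ _ _ => rfl
  · exact fun x x' y y' h1 h2 h3 h4 =>
      ⟨show x.down ≤ max x.down x'.down from le_max_left _ _,
       show x'.down ≤ max x.down x'.down from le_max_right _ _,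
       show max x.down x'.down ≤ y.down from max_le h1 h3,
       show max x.down x'.down ≤ y'.down from max_le h2 h4⟩

/-- `phiMap` as an additive homomorphism. -/
private def phiHom {H : Type*} [AddCommGroup H] [PartialOrder H] [IsOrderedAddMonoid H] (e aξ : H) : ℤ × ℤ →+ H :=
  AddMonoidHom.mk' (phiMap e aξ) (by
    intro p q; simp only [phiMap, Prod.fst_add, Prod.snd_add, add_smul]; abel)

/-- `psiMap` as an additive homomorphism. -/
private def psiHom {H : Type*} [AddCommGroup H] [PartialOrder H] [IsOrderedAddMonoid H] (e aξ aη c : H) : (Fin 4 → ℤ) →+ H :=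
  AddMonoidHom.mk' (psiMap e aξ aη c) (by
    intro p q; simp only [psiMap, Pi.add_apply, add_smul]; abel)

private lemma psiMap_vec {H : Type*} [AddCommGroup H] [PartialOrder H] [IsOrderedAddMonoid H] (e aξ aη c : H) (w x y z : ℤ) :
    psiMap e aξ aη c ![w,x,y,z] =
      w • c + x • (aξ - c) + y • (aη - c) + z • (c + e - aξ - aη) := by
  simp [psiMap]

end EnvelopeAux


/-- **Lemma 3.7.** In the universal D-envelope `(H, e, ⋈)` of `(F_X, ē)`, writing
`a_ξ = j(ā_ξ)`, `b_ξ = e − a_ξ` and `c_{ξ,η} = ⋈(0, a_ξ + a_η − e, a_ξ, a_η)`: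
(i) `φ_ξ` and `ψ_{ξ,η}` are isomorphisms of partially ordered abelian groups from
`ℤ²` (resp. `ℤ⁴`) onto `G_{ξ}` (resp. `G_{ξ,η}`);
(ii) `G_Y ∩ G_Z = G_{Y ∩ Z}` for all `Y, Z ⊆ X` with at most two elements. -/
theorem envelope_subgroups_GZ {X : Type u} {H : Type v} [AddCommGroup H] [PartialOrder H] [IsOrderedAddMonoid H]
    (e : H) (bow : H → H → H → H → H) (j : FX X →+ H)
    (henv : IsUniversalDEnvelope (eElem X) e bow j)
    (a : X → H) (hadef : ∀ ξ, a ξ = j (aElem ξ))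
    (c : X → X → H) (hcdef : ∀ ξ η, c ξ η = bow 0 (a ξ + a η - e) (a ξ) (a η)) :
    -- (i) `φ_ξ : ℤ² ≅ G_{ξ}` as partially ordered abelian groups
    (∀ ξ : X,
      Function.Injective (phiMap e (a ξ)) ∧
      Set.range (phiMap e (a ξ)) = ↑(Gsub e a c {ξ}) ∧
      (∀ p : ℤ × ℤ, 0 ≤ phiMap e (a ξ) p ↔ 0 ≤ p)) ∧
    -- (i) `ψ_{ξ,η} : ℤ⁴ ≅ G_{ξ,η}` as partially ordered abelian groups
    (∀ ξ η : X, ξ ≠ η →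
      Function.Injective (psiMap e (a ξ) (a η) (c ξ η)) ∧
      Set.range (psiMap e (a ξ) (a η) (c ξ η)) = ↑(Gsub e a c {ξ, η}) ∧
      (∀ v : Fin 4 → ℤ, 0 ≤ psiMap e (a ξ) (a η) (c ξ η) v ↔ 0 ≤ v)) ∧
    -- (ii) intersections
    (∀ Y Z : Set X, Y.Finite → Y.ncard ≤ 2 → Z.Finite → Z.ncard ≤ 2 →
      Gsub e a c Y ⊓ Gsub e a c Z = Gsub e a c (Y ∩ Z)) := by
  classical
  obtain ⟨⟨hunperf, he0, h3e, hsym1, hsym2, hint⟩, hjmono, hje, huniv⟩ := henv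
  -- basic positivity facts
  have h0a : ∀ ξ, 0 ≤ a ξ := by
    intro ξ
    have h1 : (0 : FX X) ≤ aElem ξ := by
      change (0 : Set X → ℤ) ≤ aBar ξ
      intro W; simp only [Pi.zero_apply, aBar]
      exact Set.indicator_apply_nonneg (fun _ => by norm_num)
    simpa [hadef, map_zero] using hjmono h1
  have hae : ∀ ξ, a ξ ≤ e := by
    intro ξ
    have h1 : aElem ξ ≤ eElem X := by
      change aBar ξ ≤ eBar X
      intro W; simp only [aBar, eBar, Set.indicator_apply]
      split <;> norm_num
    have := hjmono h1
    rwa [hje, ← hadef] at this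
  have hcb : ∀ ξ η, 0 ≤ c ξ η ∧ a ξ + a η - e ≤ c ξ η ∧ c ξ η ≤ a ξ ∧ c ξ η ≤ a η := by
    intro ξ η
    have hx1 : a ξ + a η - e ≤ a ξ := by
      rw [sub_le_iff_le_add]; exact add_le_add_right (hae η) (a ξ)
    have hx2 : a ξ + a η - e ≤ a η := by
      rw [sub_le_iff_le_add, add_comm (a η) e]; exact add_le_add_left (hae ξ) (a η)
    have := hint 0 (a ξ + a η - e) (a ξ) (a η) (h0a ξ) (h0a η) hx1 hx2
    rw [← hcdef] at this
    exact ⟨this.1, this.2.1, this.2.2.1, this.2.2.2⟩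
  have csymm : ∀ ξ η, c η ξ = c ξ η := by
    intro ξ η
    rw [hcdef, hcdef, hsym2 0 (a ξ + a η - e) (a ξ) (a η), add_comm (a ξ) (a η)]
  -- evaluation homomorphisms
  have hex : ∀ W : Set X, ∃ h : H →+ ℤ, Monotone h ∧ h e = 1 ∧
      (∀ ξ, ξ ∈ W → h (a ξ) = 1) ∧ (∀ ξ, ξ ∉ W → h (a ξ) = 0) ∧
      (∀ ξ η, ξ ∈ W → η ∈ W → h (c ξ η) = 1) ∧
      (∀ ξ η, ξ ∉ W ∨ η ∉ W → h (c ξ η) = 0) := by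
    intro W
    set f : FX X →+ ULift ℤ :=
      upHom.comp ((Pi.evalAddMonoidHom (fun _ : Set X => ℤ) W).comp (FX X).subtype) with hf
    have fmono : Monotone f := by
      intro g1 g2 hle
      exact hle W
    have hfe : f (eElem X) = ULift.up 1 := rfl
    obtain ⟨hh, ⟨⟨hmono, heK, hι⟩, hjf⟩, -⟩ :=
      huniv (ULift ℤ) (ULift.up 1) (fun x x' _ _ => ULift.up (max x.down x'.down))
        intDU f fmono hfe
    set hh' : H →+ ℤ := downHom.comp hh with hhh
    have hmono' : Monotone hh' := fun x y hxy => hmono hxy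
    have heK' : hh' e = 1 := congrArg ULift.down heK
    have hha1 : ∀ ξ, ξ ∈ W → hh' (a ξ) = 1 := by
      intro ξ hξ
      rw [hadef]
      have : hh' (j (aElem ξ)) = aBar ξ W := congrArg ULift.down (hjf (aElem ξ))
      rw [this]
      simp [aBar, Set.indicator_apply, hξ]
    have hha0 : ∀ ξ, ξ ∉ W → hh' (a ξ) = 0 := by
      intro ξ hξ
      rw [hadef]
      have : hh' (j (aElem ξ)) = aBar ξ W := congrArg ULift.down (hjf (aElem ξ))
      rw [this]
      simp [aBar, Set.indicator_apply, hξ]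
    have hhc : ∀ ξ η, hh' (c ξ η) = max 0 (hh' (a ξ) + hh' (a η) - 1) := by
      intro ξ η
      have h1 : hh' (bow 0 (a ξ + a η - e) (a ξ) (a η)) =
          max (hh' 0) (hh' (a ξ + a η - e)) :=
        congrArg ULift.down (hι 0 (a ξ + a η - e) (a ξ) (a η))
      rw [hcdef, h1, map_zero, map_sub, map_add, heK']
    refine ⟨hh', hmono', heK', hha1, hha0, ?_, ?_⟩
    · intro ξ η h1 h2; rw [hhc, hha1 _ h1, hha1 _ h2]; norm_num
    · intro ξ η hor
      rw [hhc]
      rcases hor with h1 | h1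
      · rw [hha0 _ h1]
        by_cases h2 : η ∈ W
        · rw [hha1 _ h2]; norm_num
        · rw [hha0 _ h2]; norm_num
      · rw [hha0 _ h1]
        by_cases h2 : ξ ∈ W
        · rw [hha1 _ h2]; norm_num
        · rw [hha0 _ h2]; norm_num
  choose h hmono he ha1 ha0 hc1 hc0 using hex
  -- generic evaluation formulas
  have phiEval : ∀ (ξ : X) (W : Set X) (p : ℤ × ℤ),
      h W (phiMap e (a ξ) p) = p.1 * h W (a ξ) + p.2 * (1 - h W (a ξ)) := by
    intro ξ W p
    simp [phiMap, map_add, map_zsmul, map_sub, he W, smul_eq_mul]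
  have psiEval : ∀ (ξ η : X) (W : Set X) (v : Fin 4 → ℤ),
      h W (psiMap e (a ξ) (a η) (c ξ η) v) =
        v 0 * h W (c ξ η) + v 1 * (h W (a ξ) - h W (c ξ η)) +
        v 2 * (h W (a η) - h W (c ξ η)) +
        v 3 * (h W (c ξ η) + 1 - h W (a ξ) - h W (a η)) := by
    intro ξ η W v
    simp [psiMap, map_add, map_zsmul, map_sub, he W, smul_eq_mul]
  -- coordinates
  have phiCoord : ∀ (ξ : X) (p : ℤ × ℤ),
      h {ξ} (phiMap e (a ξ) p) = p.1 ∧ h ∅ (phiMap e (a ξ) p) = p.2 := by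
    intro ξ p
    rw [phiEval, phiEval, ha1 {ξ} ξ rfl, ha0 ∅ ξ (Set.notMem_empty ξ)]
    constructor <;> ring
  have psiCoord : ∀ (ξ η : X), ξ ≠ η → ∀ (v : Fin 4 → ℤ),
      h {ξ, η} (psiMap e (a ξ) (a η) (c ξ η) v) = v 0 ∧
      h {ξ} (psiMap e (a ξ) (a η) (c ξ η) v) = v 1 ∧
      h {η} (psiMap e (a ξ) (a η) (c ξ η) v) = v 2 ∧
      h ∅ (psiMap e (a ξ) (a η) (c ξ η) v) = v 3 := by
    intro ξ η hne v
    have m1 : ξ ∈ ({ξ, η} : Set X) := Or.inl rfl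
    have m2 : η ∈ ({ξ, η} : Set X) := Or.inr rfl
    have m3 : η ∉ ({ξ} : Set X) := fun hmem => hne (Set.mem_singleton_iff.mp hmem).symm
    have m4 : ξ ∉ ({η} : Set X) := fun hmem => hne (Set.mem_singleton_iff.mp hmem)
    refine ⟨?_, ?_, ?_, ?_⟩
    · rw [psiEval, ha1 _ _ m1, ha1 _ _ m2, hc1 _ _ _ m1 m2]; ring
    · rw [psiEval, ha1 {ξ} ξ rfl, ha0 _ _ m3, hc0 _ _ _ (Or.inr m3)]; ring
    · rw [psiEval, ha0 _ _ m4, ha1 {η} η rfl, hc0 _ _ _ (Or.inl m4)]; ring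
    · rw [psiEval, ha0 ∅ _ (Set.notMem_empty ξ), ha0 ∅ _ (Set.notMem_empty η),
        hc0 _ _ _ (Or.inl (Set.notMem_empty ξ))]; ring
  -- membership of generators
  have e_mem : ∀ Z : Set X, e ∈ Gsub e a c Z := fun Z =>
    AddSubgroup.subset_closure (Set.mem_union_left _ (Set.mem_union_left _
      (Set.mem_union_left _ rfl)))
  have a_mem : ∀ (Z : Set X) (ξ : X), ξ ∈ Z → a ξ ∈ Gsub e a c Z := fun Z ξ hξ =>
    AddSubgroup.subset_closure (Set.mem_union_left _ (Set.mem_union_left _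
      (Set.mem_union_right _ ⟨ξ, hξ, rfl⟩)))
  have b_mem : ∀ (Z : Set X) (ξ : X), ξ ∈ Z → e - a ξ ∈ Gsub e a c Z := fun Z ξ hξ =>
    AddSubgroup.subset_closure (Set.mem_union_left _
      (Set.mem_union_right _ ⟨ξ, hξ, rfl⟩))
  have c_mem : ∀ (Z : Set X) (ξ η : X), ξ ∈ Z → η ∈ Z → ξ ≠ η → c ξ η ∈ Gsub e a c Z :=
    fun Z ξ η hξ hη hne =>
      AddSubgroup.subset_closure (Set.mem_union_right _ ⟨ξ, hξ, η, hη, hne, rfl⟩)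
  -- ranges
  have phiRange : ∀ ξ : X, Set.range (phiMap e (a ξ)) = ↑(Gsub e a c {ξ}) := by
    intro ξ
    have hsub : (phiHom e (a ξ)).range = Gsub e a c {ξ} := by
      apply le_antisymm
      · rintro x ⟨p, rfl⟩
        exact add_mem (zsmul_mem (a_mem {ξ} ξ rfl) _) (zsmul_mem (b_mem {ξ} ξ rfl) _)
      · rw [Gsub]
        apply (AddSubgroup.closure_le _).mpr
        rintro g hg
        rcases hg with ((hg | ⟨ξ', hξ', hg⟩) | ⟨ξ', hξ', hg⟩) | ⟨ξ', hξ', η', hη', hne', hg⟩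
        · rw [Set.mem_singleton_iff.mp hg]
          exact ⟨(1, 1), by simp [phiHom, phiMap]⟩
        · rw [← hg, Set.mem_singleton_iff.mp hξ']
          exact ⟨(1, 0), by simp [phiHom, phiMap]⟩
        · rw [← hg, Set.mem_singleton_iff.mp hξ']
          exact ⟨(0, 1), by simp [phiHom, phiMap]⟩
        · exact absurd ((Set.mem_singleton_iff.mp hξ').trans
            (Set.mem_singleton_iff.mp hη').symm) hne'
    rw [← hsub]; rfl
  have psiRange : ∀ (ξ η : X), ξ ≠ η →
      Set.range (psiMap e (a ξ) (a η) (c ξ η)) = ↑(Gsub e a c {ξ, η}) := by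
    intro ξ η hne
    have m1 : ξ ∈ ({ξ, η} : Set X) := Or.inl rfl
    have m2 : η ∈ ({ξ, η} : Set X) := Or.inr rfl
    have hsub : (psiHom e (a ξ) (a η) (c ξ η)).range = Gsub e a c {ξ, η} := by
      apply le_antisymm
      · rintro x ⟨v, rfl⟩
        show psiMap e (a ξ) (a η) (c ξ η) v ∈ _
        have hcmem := c_mem {ξ, η} ξ η m1 m2 hne
        have h1 : a ξ - c ξ η ∈ Gsub e a c {ξ, η} := sub_mem (a_mem {ξ, η} ξ m1) hcmem
        have h2 : a η - c ξ η ∈ Gsub e a c {ξ, η} := sub_mem (a_mem {ξ, η} η m2) hcmem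
        have h3 : c ξ η + e - a ξ - a η ∈ Gsub e a c {ξ, η} :=
          sub_mem (sub_mem (add_mem hcmem (e_mem {ξ, η})) (a_mem {ξ, η} ξ m1))
            (a_mem {ξ, η} η m2)
        exact add_mem (add_mem (add_mem (zsmul_mem hcmem _) (zsmul_mem h1 _))
          (zsmul_mem h2 _)) (zsmul_mem h3 _)
      · rw [Gsub]
        apply (AddSubgroup.closure_le _).mpr
        rintro g hg
        have psiv : ∀ w x y z : ℤ, psiHom e (a ξ) (a η) (c ξ η) ![w,x,y,z] =
            w • c ξ η + x • (a ξ - c ξ η) + y • (a η - c ξ η) +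
              z • (c ξ η + e - a ξ - a η) := fun w x y z =>
          psiMap_vec e (a ξ) (a η) (c ξ η) w x y z
        rcases hg with ((hg | ⟨ξ', hξ', hg⟩) | ⟨ξ', hξ', hg⟩) | ⟨ξ', hξ', η', hη', hne', hg⟩
        · rw [Set.mem_singleton_iff.mp hg]
          exact ⟨![1, 1, 1, 1], by rw [psiv]; module⟩
        · rcases hξ' with h1 | h1 <;> rw [← hg, h1]
          · exact ⟨![1, 1, 0, 0], by rw [psiv]; module⟩
          · exact ⟨![1, 0, 1, 0], by rw [psiv]; module⟩
        · rcases hξ' with h1 | h1 <;> rw [← hg, h1]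
          · exact ⟨![0, 0, 1, 1], by rw [psiv]; module⟩
          · exact ⟨![0, 1, 0, 1], by rw [psiv]; module⟩
        · have hval : c ξ' η' = c ξ η := by
            rcases hξ' with h1 | h1 <;> rcases hη' with h2 | h2
            · exact absurd (h1.trans h2.symm) hne'
            · rw [h1, h2]
            · rw [h1, h2]; exact csymm ξ η
            · exact absurd (h1.trans h2.symm) hne'
          rw [hg, hval]
          exact ⟨![1, 0, 0, 0], by rw [psiv]; module⟩
    rw [← hsub]; rfl
  -- Lemma A: evaluations of elements of `Gsub Z` only depend on `W ∩ Z`.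
  have lemA : ∀ (Z W W' : Set X), W ∩ Z = W' ∩ Z → ∀ x ∈ Gsub e a c Z, h W x = h W' x := by
    intro Z W W' hWW' x hx
    have hmemiff : ∀ ξ, ξ ∈ Z → (ξ ∈ W ↔ ξ ∈ W') := by
      intro ξ hξ
      constructor
      · intro hw
        have h1 : ξ ∈ W' ∩ Z := hWW' ▸ (⟨hw, hξ⟩ : ξ ∈ W ∩ Z)
        exact h1.1
      · intro hw
        have h1 : ξ ∈ W ∩ Z := hWW'.symm ▸ (⟨hw, hξ⟩ : ξ ∈ W' ∩ Z)
        exact h1.1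
    have haeq : ∀ ξ, ξ ∈ Z → h W (a ξ) = h W' (a ξ) := by
      intro ξ hξ
      by_cases hw : ξ ∈ W
      · rw [ha1 _ _ hw, ha1 _ _ ((hmemiff ξ hξ).mp hw)]
      · rw [ha0 _ _ hw, ha0 _ _ (fun hw' => hw ((hmemiff ξ hξ).mpr hw'))]
    refine AddSubgroup.closure_induction ?_ (by simp) ?_ ?_ hx
    · rintro g (((rfl | ⟨ξ, hξ, rfl⟩) | ⟨ξ, hξ, rfl⟩) | ⟨ξ, hξ, η, hη, hne, rfl⟩)
      · rw [he, he]
      · exact haeq ξ hξ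
      · simp only [map_sub, he, haeq ξ hξ]
      · by_cases hw1 : ξ ∈ W
        · by_cases hw2 : η ∈ W
          · rw [hc1 _ _ _ hw1 hw2,
              hc1 _ _ _ ((hmemiff ξ hξ).mp hw1) ((hmemiff η hη).mp hw2)]
          · rw [hc0 _ _ _ (Or.inr hw2),
              hc0 _ _ _ (Or.inr (fun hw' => hw2 ((hmemiff η hη).mpr hw')))]
        · rw [hc0 _ _ _ (Or.inl hw1),
            hc0 _ _ _ (Or.inl (fun hw' => hw1 ((hmemiff ξ hξ).mpr hw')))]
    · intro x y _ _ h1 h2; simp only [map_add, h1, h2]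
    · intro x _ h1; simp only [map_neg, h1]
  -- Gsub is monotone
  have GsubMono : ∀ {Y Z : Set X}, Y ⊆ Z → Gsub e a c Y ≤ Gsub e a c Z := by
    intro Y Z hYZ
    apply AddSubgroup.closure_mono
    refine Set.union_subset_union (Set.union_subset_union
      (Set.union_subset_union_right _ (Set.image_mono hYZ))
      (Set.image_mono hYZ)) ?_
    rintro w ⟨ξ, hξ, η, hη, hne, rfl⟩
    exact ⟨ξ, hYZ hξ, η, hYZ hη, hne, rfl⟩
  -- main results
  refine ⟨?_, ?_, ?_⟩
  · -- φ part
    intro ξ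
    refine ⟨?_, phiRange ξ, ?_⟩
    · intro p q hpq
      have h1 := (phiCoord ξ p).1
      have h2 := (phiCoord ξ p).2
      rw [hpq, (phiCoord ξ q).1] at h1
      rw [hpq, (phiCoord ξ q).2] at h2
      exact Prod.ext h1.symm h2.symm
    · intro p
      constructor
      · intro hpos
        have k1 : (0 : ℤ) ≤ h {ξ} (phiMap e (a ξ) p) := by
          simpa using hmono {ξ} hpos
        have k2 : (0 : ℤ) ≤ h ∅ (phiMap e (a ξ) p) := by
          simpa using hmono ∅ hpos
        rw [(phiCoord ξ p).1] at k1
        rw [(phiCoord ξ p).2] at k2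
        exact Prod.le_def.mpr ⟨k1, k2⟩
      · intro hp
        obtain ⟨hp1, hp2⟩ := Prod.le_def.mp hp
        exact add_nonneg (zsmul_nonneg (h0a ξ) hp1)
          (zsmul_nonneg (sub_nonneg.mpr (hae ξ)) hp2)
  · -- ψ part
    intro ξ η hne
    obtain ⟨hc_nn, hc_ge, hc_le1, hc_le2⟩ := hcb ξ η
    refine ⟨?_, psiRange ξ η hne, ?_⟩
    · intro u w huw
      obtain ⟨k0, k1, k2, k3⟩ := psiCoord ξ η hne u
      obtain ⟨l0, l1, l2, l3⟩ := psiCoord ξ η hne w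
      rw [huw] at k0 k1 k2 k3
      funext i
      fin_cases i
      · exact k0.symm.trans l0
      · exact k1.symm.trans l1
      · exact k2.symm.trans l2
      · exact k3.symm.trans l3
    · intro v
      obtain ⟨k0, k1, k2, k3⟩ := psiCoord ξ η hne v
      constructor
      · intro hpos
        have key : ∀ W : Set X, (0 : ℤ) ≤ h W (psiMap e (a ξ) (a η) (c ξ η) v) := by
          intro W; simpa using hmono W hpos
        intro i
        fin_cases i
        · exact le_of_le_of_eq (key {ξ, η}) k0
        · exact le_of_le_of_eq (key {ξ}) k1
        · exact le_of_le_of_eq (key {η}) k2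
        · exact le_of_le_of_eq (key ∅) k3
      · intro hv
        have g3 : (0:H) ≤ c ξ η + e - a ξ - a η := by
          have : a ξ + a η - e ≤ c ξ η := hc_ge
          have h1 : (0:H) ≤ c ξ η - (a ξ + a η - e) := sub_nonneg.mpr this
          have h2 : c ξ η - (a ξ + a η - e) = c ξ η + e - a ξ - a η := by abel
          rwa [h2] at h1
        exact add_nonneg (add_nonneg (add_nonneg
          (zsmul_nonneg hc_nn (hv 0))
          (zsmul_nonneg (sub_nonneg.mpr hc_le1) (hv 1)))
          (zsmul_nonneg (sub_nonneg.mpr hc_le2) (hv 2)))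
          (zsmul_nonneg g3 (hv 3))
  · -- part (ii)
    intro Y Z hYfin hY2 hZfin hZ2
    refine le_antisymm ?_ (le_inf (GsubMono Set.inter_subset_left)
      (GsubMono Set.inter_subset_right))
    intro x hx
    obtain ⟨hxY, hxZ⟩ := AddSubgroup.mem_inf.mp hx
    have hshape : Y = ∅ ∨ (∃ ξ, Y = {ξ}) ∨ (∃ ξ η, ξ ≠ η ∧ Y = {ξ, η}) := by
      rcases hn : Y.ncard with _ | _ | _ | n
      · exact Or.inl ((Set.ncard_eq_zero hYfin).mp hn)
      · exact Or.inr (Or.inl (Set.ncard_eq_one.mp hn))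
      · exact Or.inr (Or.inr (Set.ncard_eq_two.mp hn))
      · omega
    rcases hshape with rfl | ⟨ξ, rfl⟩ | ⟨ξ, η, hne, rfl⟩
    · rwa [Set.empty_inter]
    · -- Y = {ξ}
      by_cases hξZ : ξ ∈ Z
      · have hYZ : ({ξ} : Set X) ∩ Z = {ξ} :=
          Set.inter_eq_left.mpr (Set.singleton_subset_iff.mpr hξZ)
        rwa [hYZ]
      · have hxr : x ∈ Set.range (phiMap e (a ξ)) := by rw [phiRange ξ]; exact hxY
        obtain ⟨p, rfl⟩ := hxr
        have heval := lemA Z {ξ} ∅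
          (by rw [Set.singleton_inter_eq_empty.mpr hξZ, Set.empty_inter]) _ hxZ
        rw [(phiCoord ξ p).1, (phiCoord ξ p).2] at heval
        have hxeq : phiMap e (a ξ) p = p.1 • e := by
          show p.1 • a ξ + p.2 • (e - a ξ) = p.1 • e
          rw [← heval]; module
        rw [hxeq]
        exact zsmul_mem (e_mem _) _
    · -- Y = {ξ, η}
      have m1 : ξ ∈ ({ξ, η} : Set X) := Or.inl rfl
      have m2 : η ∈ ({ξ, η} : Set X) := Or.inr rfl
      have hxr : x ∈ Set.range (psiMap e (a ξ) (a η) (c ξ η)) := by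
        rw [psiRange ξ η hne]; exact hxY
      obtain ⟨v, rfl⟩ := hxr
      obtain ⟨k0, k1, k2, k3⟩ := psiCoord ξ η hne v
      by_cases hξZ : ξ ∈ Z <;> by_cases hηZ : η ∈ Z
      · have hYZ : ({ξ, η} : Set X) ∩ Z = {ξ, η} := by
          apply Set.inter_eq_left.mpr
          rintro t (rfl | rfl) <;> assumption
        rwa [hYZ]
      · -- ξ ∈ Z, η ∉ Z
        have hi1 : ({ξ, η} : Set X) ∩ Z = ({ξ} : Set X) ∩ Z := by
          ext t
          simp only [Set.mem_inter_iff, Set.mem_insert_iff, Set.mem_singleton_iff]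
          constructor
          · rintro ⟨rfl | rfl, h2⟩
            · exact ⟨rfl, h2⟩
            · exact absurd h2 hηZ
          · rintro ⟨rfl, h2⟩
            exact ⟨Or.inl rfl, h2⟩
        have hi2 : ({η} : Set X) ∩ Z = (∅ : Set X) ∩ Z := by
          rw [Set.singleton_inter_eq_empty.mpr hηZ, Set.empty_inter]
        have e1 := lemA Z {ξ, η} {ξ} hi1 _ hxZ
        have e2 := lemA Z {η} ∅ hi2 _ hxZ
        rw [k0, k1] at e1
        rw [k2, k3] at e2
        have hxeq : psiMap e (a ξ) (a η) (c ξ η) v = v 0 • a ξ + v 2 • (e - a ξ) := by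
          show v 0 • c ξ η + v 1 • (a ξ - c ξ η) + v 2 • (a η - c ξ η) +
            v 3 • (c ξ η + e - a ξ - a η) = _
          rw [← e1, ← e2]; module
        rw [hxeq]
        exact add_mem (zsmul_mem (a_mem ({ξ, η} ∩ Z) ξ ⟨m1, hξZ⟩) _)
          (zsmul_mem (b_mem ({ξ, η} ∩ Z) ξ ⟨m1, hξZ⟩) _)
      · -- ξ ∉ Z, η ∈ Z
        have hi1 : ({ξ, η} : Set X) ∩ Z = ({η} : Set X) ∩ Z := by
          ext t
          simp only [Set.mem_inter_iff, Set.mem_insert_iff, Set.mem_singleton_iff]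
          constructor
          · rintro ⟨rfl | rfl, h2⟩
            · exact absurd h2 hξZ
            · exact ⟨rfl, h2⟩
          · rintro ⟨rfl, h2⟩
            exact ⟨Or.inr rfl, h2⟩
        have hi2 : ({ξ} : Set X) ∩ Z = (∅ : Set X) ∩ Z := by
          rw [Set.singleton_inter_eq_empty.mpr hξZ, Set.empty_inter]
        have e1 := lemA Z {ξ, η} {η} hi1 _ hxZ
        have e2 := lemA Z {ξ} ∅ hi2 _ hxZ
        rw [k0, k2] at e1
        rw [k1, k3] at e2
        have hxeq : psiMap e (a ξ) (a η) (c ξ η) v = v 0 • a η + v 1 • (e - a η) := by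
          show v 0 • c ξ η + v 1 • (a ξ - c ξ η) + v 2 • (a η - c ξ η) +
            v 3 • (c ξ η + e - a ξ - a η) = _
          rw [← e1, ← e2]; module
        rw [hxeq]
        exact add_mem (zsmul_mem (a_mem ({ξ, η} ∩ Z) η ⟨m2, hηZ⟩) _)
          (zsmul_mem (b_mem ({ξ, η} ∩ Z) η ⟨m2, hηZ⟩) _)
      · -- ξ ∉ Z, η ∉ Z
        have hi1 : ({ξ, η} : Set X) ∩ Z = (∅ : Set X) ∩ Z := by
          rw [Set.empty_inter]
          ext t
          simp only [Set.mem_inter_iff, Set.mem_insert_iff, Set.mem_singleton_iff,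
            Set.mem_empty_iff_false, iff_false]
          rintro ⟨rfl | rfl, h2⟩
          · exact hξZ h2
          · exact hηZ h2
        have hi2 : ({ξ} : Set X) ∩ Z = (∅ : Set X) ∩ Z := by
          rw [Set.singleton_inter_eq_empty.mpr hξZ, Set.empty_inter]
        have hi3 : ({η} : Set X) ∩ Z = (∅ : Set X) ∩ Z := by
          rw [Set.singleton_inter_eq_empty.mpr hηZ, Set.empty_inter]
        have e1 := lemA Z {ξ, η} ∅ hi1 _ hxZ
        have e2 := lemA Z {ξ} ∅ hi2 _ hxZ
        have e3 := lemA Z {η} ∅ hi3 _ hxZ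
        rw [k0, k3] at e1
        rw [k1, k3] at e2
        rw [k2, k3] at e3
        have hxeq : psiMap e (a ξ) (a η) (c ξ η) v = v 3 • e := by
          show v 0 • c ξ η + v 1 • (a ξ - c ξ η) + v 2 • (a η - c ξ η) +
            v 3 • (c ξ η + e - a ξ - a η) = _
          rw [e1, e2, e3]; module
        rw [hxeq]
        exact zsmul_mem (e_mem _) _
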